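/- If G is an almost complete bipartite graph (obtained from a complete bipartite graph by removing a matching), then the minimum size of an independent vertex cover of G equals the minimum size of a vertex cover of G. -/
import Mathlib


open SimpleGraph

/-- `S` is an independent set of `G`. -/
def IsIS {V : Type*} (G : SimpleGraph V) (S : Set V) : Prop :=
  S.Pairwise fun u v => ¬ G.Adj u v

/-- `G` contains no induced subgraph isomorphic to `H`. -/
def HFree {W V : Type*} (H : SimpleGraph W) (G : SimpleGraph V) : Prop :=
  IsEmpty (H ↪g G)

/-- `G` is bipartite: the vertex set splits into two independent sets. -/
def IsBip {V : Type*} (G : SimpleGraph V) : Prop :=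
  ∃ X : Set V, IsIS G X ∧ IsIS G Xᶜ

/-- `S` is a vertex cover of `G`. -/
def IsVC {V : Type*} (G : SimpleGraph V) (S : Finset V) : Prop :=
  ∀ ⦃u v⦄, G.Adj u v → u ∈ S ∨ v ∈ S

/-- minimum size of a vertex cover. -/
noncomputable def vc {V : Type*} (G : SimpleGraph V) : ℕ :=
  sInf {n | ∃ S : Finset V, IsVC G S ∧ S.card = n}

/-- minimum size of an independent vertex cover. -/
noncomputable def ivc {V : Type*} (G : SimpleGraph V) : ℕ :=
  sInf {n | ∃ S : Finset V, IsVC G S ∧ IsIS G ↑S ∧ S.card = n}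

/-- `G` is an almost complete bipartite graph: it has a bipartition `(X, Xᶜ)`
such that every vertex has at most one non-neighbour on the other side
(so the missing edges form a matching of a complete bipartite graph). -/
def IsAlmostCompleteBip {V : Type*} (G : SimpleGraph V) : Prop :=
  ∃ X : Set V, IsIS G X ∧ IsIS G Xᶜ ∧
    (∀ x ∈ X, {y ∈ Xᶜ | ¬ G.Adj x y}.Subsingleton) ∧
    (∀ y ∈ Xᶜ, {x ∈ X | ¬ G.Adj y x}.Subsingleton)

lemma exists_ind_cover {V : Type*} [Fintype V] (G : SimpleGraph V)
    (h : IsAlmostCompleteBip G) (S : Finset V) (hS : IsVC G S) :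
    ∃ T : Finset V, IsVC G T ∧ IsIS G ↑T ∧ T.card ≤ S.card := by
  classical
  obtain ⟨X, hX, hXc, hX1, hY1⟩ := h
  set XF : Finset V := X.toFinset with hXF
  set YF : Finset V := Xᶜ.toFinset with hYF
  have hmemX : ∀ v, v ∈ XF ↔ v ∈ X := fun v => Set.mem_toFinset
  have hmemY : ∀ v, v ∈ YF ↔ v ∈ Xᶜ := fun v => Set.mem_toFinset
  have hXcov : IsVC G XF := by
    intro u v huv
    by_cases hu : u ∈ X
    · exact Or.inl ((hmemX u).2 hu)
    · by_cases hv : v ∈ X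
      · exact Or.inr ((hmemX v).2 hv)
      · exact absurd huv (hXc hu hv huv.ne)
  have hYcov : IsVC G YF := by
    intro u v huv
    by_cases hu : u ∈ X
    · by_cases hv : v ∈ X
      · exact absurd huv (hX hu hv huv.ne)
      · exact Or.inr ((hmemY v).2 hv)
    · exact Or.inl ((hmemY u).2 hu)
  have hXind : IsIS G ↑XF := by rw [hXF, Set.coe_toFinset]; exact hX
  have hYind : IsIS G ↑YF := by rw [hYF, Set.coe_toFinset]; exact hXc
  by_cases hXS : ∀ x ∈ X, x ∈ S
  · exact ⟨XF, hXcov, hXind, Finset.card_le_card (fun v hv => hXS v ((hmemX v).1 hv))⟩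
  by_cases hYS : ∀ y ∈ Xᶜ, y ∈ S
  · exact ⟨YF, hYcov, hYind, Finset.card_le_card (fun v hv => hYS v ((hmemY v).1 hv))⟩
  push_neg at hXS hYS
  obtain ⟨x0, hx0X, hx0S⟩ := hXS
  obtain ⟨y0, hy0Y, hy0S⟩ := hYS
  have hnadj : ¬ G.Adj x0 y0 := by
    intro hadj
    rcases hS hadj with h1 | h1
    · exact hx0S h1
    · exact hy0S h1
  -- every x ∈ X not in S equals x0; every y ∈ Xᶜ not in S equals y0
  have hXsub : XF \ S ⊆ {x0} := by
    intro x hx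
    rw [Finset.mem_sdiff] at hx
    have hxX := (hmemX x).1 hx.1
    have hnadjx : ¬ G.Adj y0 x := by
      intro hadj
      rcases hS hadj with h1 | h1
      · exact hy0S h1
      · exact hx.2 h1
    have hnadjx0 : ¬ G.Adj y0 x0 := fun hadj => hnadj hadj.symm
    have := hY1 y0 hy0Y ⟨hxX, hnadjx⟩ ⟨hx0X, hnadjx0⟩
    simpa using this
  have hYsub : YF \ S ⊆ {y0} := by
    intro y hy
    rw [Finset.mem_sdiff] at hy
    have hyY := (hmemY y).1 hy.1
    have hnadjy : ¬ G.Adj x0 y := by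
      intro hadj
      rcases hS hadj with h1 | h1
      · exact hx0S h1
      · exact hy.2 h1
    have := hX1 x0 hx0X ⟨hyY, hnadjy⟩ ⟨hy0Y, hnadj⟩
    simpa using this
  have hXcard : XF.card ≤ (XF ∩ S).card + 1 := by
    have h1 : XF.card = (XF ∩ S).card + (XF \ S).card :=
      (Finset.card_inter_add_card_sdiff XF S).symm
    have h2 : (XF \ S).card ≤ 1 := by
      calc (XF \ S).card ≤ ({x0} : Finset V).card := Finset.card_le_card hXsub
      _ = 1 := Finset.card_singleton x0
    omega
  have hYcard : YF.card ≤ (YF ∩ S).card + 1 := by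
    have h1 : YF.card = (YF ∩ S).card + (YF \ S).card :=
      (Finset.card_inter_add_card_sdiff YF S).symm
    have h2 : (YF \ S).card ≤ 1 := by
      calc (YF \ S).card ≤ ({y0} : Finset V).card := Finset.card_le_card hYsub
      _ = 1 := Finset.card_singleton y0
    omega
  have hScard : (XF ∩ S).card + (YF ∩ S).card = S.card := by
    have hdisj : Disjoint (XF ∩ S) (YF ∩ S) := by
      rw [Finset.disjoint_left]
      intro a ha hb
      exact ((hmemY a).1 (Finset.mem_inter.1 hb).1) ((hmemX a).1 (Finset.mem_inter.1 ha).1)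
    have hunion : (XF ∩ S) ∪ (YF ∩ S) = S := by
      ext a
      simp only [Finset.mem_union, Finset.mem_inter, hmemX, hmemY, Set.mem_compl_iff]
      tauto
    rw [← Finset.card_union_of_disjoint hdisj, hunion]
  by_cases hY2 : 2 ≤ YF.card
  · exact ⟨XF, hXcov, hXind, by omega⟩
  by_cases hX2 : 2 ≤ XF.card
  · exact ⟨YF, hYcov, hYind, by omega⟩
  · -- X = {x0}, Xᶜ = {y0}, G has no edges
    refine ⟨∅, ?_, ?_, by simp⟩
    · intro u v huv
      exfalso
      have hux0 : ∀ w, w ∈ X → w = x0 := by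
        intro w hw
        have : w ∈ XF := (hmemX w).2 hw
        have hx0' : x0 ∈ XF := (hmemX x0).2 hx0X
        by_contra hne
        have : 2 ≤ XF.card := Finset.one_lt_card.2 ⟨w, this, x0, hx0', hne⟩
        omega
      have huy0 : ∀ w, w ∈ Xᶜ → w = y0 := by
        intro w hw
        have : w ∈ YF := (hmemY w).2 hw
        have hy0' : y0 ∈ YF := (hmemY y0).2 hy0Y
        by_contra hne
        have : 2 ≤ YF.card := Finset.one_lt_card.2 ⟨w, this, y0, hy0', hne⟩
        omega
      by_cases hu : u ∈ X
      · by_cases hv : v ∈ X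
        · exact hX hu hv huv.ne huv
        · exact hnadj (hux0 u hu ▸ huy0 v hv ▸ huv)
      · by_cases hv : v ∈ X
        · exact hnadj (hux0 v hv ▸ huy0 u hu ▸ huv.symm)
        · exact hXc hu hv huv.ne huv
    · intro a ha
      simp at ha

theorem stmt_4 {V : Type*} [Fintype V] (G : SimpleGraph V)
    (h : IsAlmostCompleteBip G) : ivc G = vc G := by
  classical
  obtain ⟨X, hX, hXc, hX1, hY1⟩ := h
  have hXcov : IsVC G X.toFinset := by
    intro u v huv
    by_cases hu : u ∈ X
    · exact Or.inl (Set.mem_toFinset.2 hu)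
    · by_cases hv : v ∈ X
      · exact Or.inr (Set.mem_toFinset.2 hv)
      · exact absurd huv (hXc hu hv huv.ne)
  have hXind : IsIS G ↑X.toFinset := by rw [Set.coe_toFinset]; exact hX
  have hne : {n | ∃ S : Finset V, IsVC G S ∧ IsIS G ↑S ∧ S.card = n}.Nonempty :=
    ⟨X.toFinset.card, X.toFinset, hXcov, hXind, rfl⟩
  have hne' : {n | ∃ S : Finset V, IsVC G S ∧ S.card = n}.Nonempty :=
    ⟨X.toFinset.card, X.toFinset, hXcov, rfl⟩
  apply le_antisymm
  · -- ivc ≤ vc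
    obtain ⟨S, hSvc, hScard⟩ := Nat.sInf_mem hne'
    obtain ⟨T, hT1, hT2, hT3⟩ := exists_ind_cover G ⟨X, hX, hXc, hX1, hY1⟩ S hSvc
    calc ivc G ≤ T.card := Nat.sInf_le ⟨T, hT1, hT2, rfl⟩
    _ ≤ S.card := hT3
    _ = vc G := hScard
  · -- vc ≤ ivc
    obtain ⟨S, hS1, hS2, hS3⟩ := Nat.sInf_mem hne
    exact Nat.sInf_le ⟨S, hS1, hS3⟩
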